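/- If DTW_{μ_τ}(X,Y) > L·r for strings X, Y of length at most L, then DTW_{μ_τ}(s_r(X), s_r(Y)) > L·r/2. -/

import Mathlib

open scoped ENNReal

def isStep (p q : ℕ × ℕ) : Prop :=
  (q.1 = p.1 + 1 ∧ q.2 = p.2) ∨ (q.1 = p.1 ∧ q.2 = p.2 + 1) ∨
    (q.1 = p.1 + 1 ∧ q.2 = p.2 + 1)

/-- A warping path for strings of lengths `m`, `n` (1-based grid). -/
def IsWarpingPath (m n : ℕ) (π : List (ℕ × ℕ)) : Prop :=
  π ≠ [] ∧ π.head? = some (1, 1) ∧ π.getLast? = some (m, n) ∧ π.Chain' isStep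

/-- Cost of a path: sum of letter distances over its vertices (1-based indexing). -/
noncomputable def pathCost {α : Type*} [Inhabited α] (d : α → α → ℝ≥0∞)
    (X Y : List α) (π : List (ℕ × ℕ)) : ℝ≥0∞ :=
  (π.map (fun p => d (X.getD (p.1 - 1) default) (Y.getD (p.2 - 1) default))).sum

open Classical in
/-- DTW distance: 0 if both strings empty, otherwise the infimum of warping path costs
(`⊤` when no warping path exists, e.g. exactly one string is empty). -/
noncomputable def dtw {α : Type*} [Inhabited α] (d : α → α → ℝ≥0∞)
    (X Y : List α) : ℝ≥0∞ :=
  if X = [] ∧ Y = [] then 0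
  else ⨅ π : {π : List (ℕ × ℕ) // IsWarpingPath X.length Y.length π},
    pathCost d X Y π.1

open scoped NNReal

/-- Maximum weight among the first `n` edges on the path from `u` towards the root
(the edge above a node `w` has weight `weight w`). -/
noncomputable def upMax {V : Type*} (parent : V → V) (weight : V → ℝ≥0)
    (u : V) (n : ℕ) : ℝ≥0 :=
  (Finset.range n).sup (fun k => weight (parent^[k] u))

/-- The (well-separated) tree metric: the maximum weight of an edge on the shortest
path between `u` and `v`, expressed as the infimum over common ancestors of the
maximum edge weight on the path through that ancestor. -/
noncomputable def treeDist {V : Type*} (parent : V → V) (weight : V → ℝ≥0)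
    (u v : V) : ℝ≥0∞ :=
  ⨅ p : {p : ℕ × ℕ // parent^[p.1] u = parent^[p.2] v},
    ((max (upMax parent weight u p.1.1) (upMax parent weight v p.1.2) : ℝ≥0) : ℝ≥0∞)

lemma isStep_mono {p q : ℕ × ℕ} (h : isStep p q) :
    p.1 ≤ q.1 ∧ p.2 ≤ q.2 ∧ p.1 + p.2 + 1 ≤ q.1 + q.2 := by
  rcases h with ⟨h1, h2⟩ | ⟨h1, h2⟩ | ⟨h1, h2⟩ <;> omega

lemma chain_head_le : ∀ (π : List (ℕ × ℕ)), π.Chain' isStep → ∀ p q,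
    π.head? = some p → q ∈ π → p.1 ≤ q.1 ∧ p.2 ≤ q.2
  | [], _, p, q, hp, hq => by simp at hq
  | [a], _, p, q, hp, hq => by
      simp only [List.head?_cons, Option.some.injEq] at hp
      simp only [List.mem_singleton] at hq
      subst hp; subst hq; exact ⟨le_rfl, le_rfl⟩
  | a :: b :: t, hc, p, q, hp, hq => by
      rw [List.Chain', List.isChain_cons_cons] at hc
      simp only [List.head?_cons, Option.some.injEq] at hp
      subst hp
      rcases List.mem_cons.mp hq with rfl | hq
      · exact ⟨le_rfl, le_rfl⟩
      · have ih := chain_head_le (b :: t) hc.2 b q rfl hq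
        have hst := isStep_mono hc.1
        omega

lemma chain_le_last : ∀ (π : List (ℕ × ℕ)), π.Chain' isStep → ∀ p q,
    π.getLast? = some p → q ∈ π → q.1 ≤ p.1 ∧ q.2 ≤ p.2
  | [], _, p, q, hp, hq => by simp at hq
  | [a], _, p, q, hp, hq => by
      simp only [List.getLast?_singleton, Option.some.injEq] at hp
      simp only [List.mem_singleton] at hq
      subst hp; subst hq; exact ⟨le_rfl, le_rfl⟩
  | a :: b :: t, hc, p, q, hp, hq => by
      rw [List.Chain', List.isChain_cons_cons] at hc
      rw [List.getLast?_cons_cons] at hp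
      rcases List.mem_cons.mp hq with rfl | hq
      · have ih := chain_le_last (b :: t) hc.2 p b hp List.mem_cons_self
        have hst := isStep_mono hc.1
        omega
      · exact chain_le_last (b :: t) hc.2 p q hp hq

lemma chain_length_le : ∀ (π : List (ℕ × ℕ)), π.Chain' isStep → ∀ p q,
    π.head? = some p → π.getLast? = some q →
    π.length + p.1 + p.2 ≤ q.1 + q.2 + 1
  | [], _, p, q, hp, hq => by simp at hp
  | [a], _, p, q, hp, hq => by
      simp only [List.head?_cons, Option.some.injEq] at hp
      simp only [List.getLast?_singleton, Option.some.injEq] at hq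
      subst hp; subst hq; simp only [List.length_cons, List.length_nil]; omega
  | a :: b :: t, hc, p, q, hp, hq => by
      rw [List.Chain', List.isChain_cons_cons] at hc
      simp only [List.head?_cons, Option.some.injEq] at hp
      subst hp
      rw [List.getLast?_cons_cons] at hq
      have ih := chain_length_le (b :: t) hc.2 b q rfl hq
      have hst := isStep_mono hc.1
      simp only [List.length_cons] at ih ⊢
      omega

/-- if `DTW_{μ_τ}(X,Y) > L·r` for strings of length at most `L`, then
`DTW_{μ_τ}(s_r(X), s_r(Y)) > L·r/2`, where `s` is the `r`-simplification. -/
theorem dtw_simplification_gap {V : Type*} [Inhabited V]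
    (parent : V → V) (weight : V → ℝ≥0) (root : V)
    (hroot : parent root = root) (hreach : ∀ v, ∃ n, parent^[n] v = root)
    (hmono : ∀ v, weight v ≤ weight (parent v))
    (r : ℝ≥0) (hr : 1 ≤ r) (s : V → V)
    (hs : ∀ a, ∃ n, parent^[n] a = s a ∧
      (∀ k, k < n → weight (parent^[k] a) ≤ r / 4) ∧
      (s a = root ∨ r / 4 < weight (s a)))
    (L : ℕ) (X Y : List V) (hX : X.length ≤ L) (hY : Y.length ≤ L)
    (hbig : (L : ℝ≥0∞) * (r : ℝ≥0∞) < dtw (treeDist parent weight) X Y) :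
    (L : ℝ≥0∞) * (r : ℝ≥0∞) / 2 <
      dtw (treeDist parent weight) (X.map s) (Y.map s) := by
  classical
  set c : ℝ≥0 := r / 4 with hc
  -- Step A : letterwise bound
  have key : ∀ a b : V, treeDist parent weight a b ≤
      treeDist parent weight (s a) (s b) + (c : ℝ≥0∞) := by
    intro a b
    obtain ⟨na, hna, hka, -⟩ := hs a
    obtain ⟨nb, hnb, hkb, -⟩ := hs b
    conv_rhs => rw [treeDist]
    rw [ENNReal.iInf_add]
    refine le_iInf fun ⟨⟨q1, q2⟩, hq⟩ => ?_
    have hw : parent^[na + q1] a = parent^[nb + q2] b := by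
      rw [add_comm na q1, Function.iterate_add_apply, hna,
        add_comm nb q2, Function.iterate_add_apply, hnb]
      exact hq
    rw [treeDist]
    refine le_trans (iInf_le _ ⟨(na + q1, nb + q2), hw⟩) ?_
    rw [← ENNReal.coe_add, ENNReal.coe_le_coe]
    have hup : ∀ (u : V) (nu qu : ℕ), parent^[nu] u = s u →
        (∀ k, k < nu → weight (parent^[k] u) ≤ c) →
        upMax parent weight u (nu + qu) ≤ max (upMax parent weight (s u) qu) c := by
      intro u nu qu hnu hku
      refine Finset.sup_le fun k hk => ?_
      rw [Finset.mem_range] at hk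
      by_cases h : k < nu
      · exact le_max_of_le_right (hku k h)
      · push_neg at h
        have hkeq : k = (k - nu) + nu := by omega
        have hk2 : k - nu + nu = k := by omega
        have heq : parent^[k] u = parent^[k - nu] (s u) := by
          rw [← hnu, ← Function.iterate_add_apply, hk2]
        rw [heq, upMax]
        refine le_max_of_le_left ?_
        exact Finset.le_sup (f := fun j => weight (parent^[j] (s u)))
          (Finset.mem_range.mpr (show k - nu < qu by omega))
    have h1 := hup a na q1 hna hka
    have h2 := hup b nb q2 hnb hkb
    refine max_le (h1.trans ?_) (h2.trans ?_)
    · exact max_le (le_add_right (le_max_left _ _)) (le_add_left le_rfl)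
    · exact max_le (le_add_right (le_max_right _ _)) (le_add_left le_rfl)
  -- Step B : pathwise bound
  have pathBound : ∀ π : List (ℕ × ℕ), IsWarpingPath X.length Y.length π →
      pathCost (treeDist parent weight) X Y π ≤
        pathCost (treeDist parent weight) (X.map s) (Y.map s) π
          + (π.length : ℝ≥0∞) * (c : ℝ≥0∞) := by
    intro π hπ
    obtain ⟨hne', hh, hl, hch⟩ := hπ
    have hpt : ∀ q ∈ π,
        treeDist parent weight (X.getD (q.1 - 1) default) (Y.getD (q.2 - 1) default) ≤
        treeDist parent weight ((X.map s).getD (q.1 - 1) default)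
          ((Y.map s).getD (q.2 - 1) default) + (c : ℝ≥0∞) := by
      intro q hq
      have h1 : 1 ≤ q.1 ∧ 1 ≤ q.2 := chain_head_le π hch (1, 1) q hh hq
      have h2 : q.1 ≤ X.length ∧ q.2 ≤ Y.length :=
        chain_le_last π hch (X.length, Y.length) q hl hq
      have hx : q.1 - 1 < X.length := by omega
      have hy : q.2 - 1 < Y.length := by omega
      have ex : (X.map s).getD (q.1 - 1) default = s (X.getD (q.1 - 1) default) := by
        rw [List.getD_eq_getElem _ _ (by simpa using hx), List.getD_eq_getElem _ _ hx,
          List.getElem_map]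
      have ey : (Y.map s).getD (q.2 - 1) default = s (Y.getD (q.2 - 1) default) := by
        rw [List.getD_eq_getElem _ _ (by simpa using hy), List.getD_eq_getElem _ _ hy,
          List.getElem_map]
      rw [ex, ey]
      exact key _ _
    rw [pathCost, pathCost]
    refine le_trans (List.sum_le_sum hpt) ?_
    rw [List.sum_map_add]
    gcongr
    simp [List.map_const', List.sum_replicate, nsmul_eq_mul]
  -- arithmetic facts
  have hLr2 : (L : ℝ≥0∞) * (r : ℝ≥0∞) / 2 = (((L : ℝ≥0) * r / 2 : ℝ≥0) : ℝ≥0∞) := by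
    rw [ENNReal.coe_div two_ne_zero, ENNReal.coe_mul, ENNReal.coe_natCast]
    norm_num
  -- Step C : dtw bound
  have main : dtw (treeDist parent weight) X Y ≤
      dtw (treeDist parent weight) (X.map s) (Y.map s)
        + (L : ℝ≥0∞) * (r : ℝ≥0∞) / 2 := by
    by_cases h0 : X = [] ∧ Y = []
    · rw [dtw, if_pos h0]; exact zero_le
    · have h0' : ¬(X.map s = [] ∧ Y.map s = []) := by
        simpa only [List.map_eq_nil_iff] using h0
      rw [dtw, dtw, if_neg h0, if_neg h0']
      rw [ENNReal.iInf_add]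
      refine le_iInf fun ⟨π, hπ'⟩ => ?_
      have hπ : IsWarpingPath X.length Y.length π := by
        rwa [List.length_map, List.length_map] at hπ'
      have hmul : (π.length : ℝ≥0∞) * (c : ℝ≥0∞) ≤ (L : ℝ≥0∞) * (r : ℝ≥0∞) / 2 := by
        obtain ⟨hne', hh, hl, hch⟩ := hπ
        have hlen : π.length + 1 + 1 ≤ X.length + Y.length + 1 :=
          chain_length_le π hch (1, 1) (X.length, Y.length) hh hl
        have hlen' : π.length ≤ 2 * L := by omega
        calc (π.length : ℝ≥0∞) * (c : ℝ≥0∞)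
            ≤ ((2 * L : ℕ) : ℝ≥0∞) * (c : ℝ≥0∞) := by
              exact mul_le_mul_left (by exact_mod_cast hlen') _
          _ = ((((2 * L : ℕ) : ℝ≥0) * c : ℝ≥0) : ℝ≥0∞) := by
              rw [ENNReal.coe_mul, ENNReal.coe_natCast]
          _ = (((L : ℝ≥0) * r / 2 : ℝ≥0) : ℝ≥0∞) := by
              congr 1
              rw [hc]
              push_cast
              field_simp
              ring
          _ = (L : ℝ≥0∞) * (r : ℝ≥0∞) / 2 := hLr2.symm
      calc (⨅ σ : {σ : List (ℕ × ℕ) // IsWarpingPath X.length Y.length σ},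
              pathCost (treeDist parent weight) X Y σ.1)
          ≤ pathCost (treeDist parent weight) X Y π := iInf_le _ (⟨π, hπ⟩ : {σ : List (ℕ × ℕ) // IsWarpingPath X.length Y.length σ})
        _ ≤ pathCost (treeDist parent weight) (X.map s) (Y.map s) π
              + (π.length : ℝ≥0∞) * (c : ℝ≥0∞) := pathBound π hπ
        _ ≤ pathCost (treeDist parent weight) (X.map s) (Y.map s) π
              + (L : ℝ≥0∞) * (r : ℝ≥0∞) / 2 := add_le_add_right hmul _
  -- Step D : conclude
  have hfin : (L : ℝ≥0∞) * (r : ℝ≥0∞) / 2 ≠ ⊤ := by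
    rw [hLr2]; exact ENNReal.coe_ne_top
  have hlt := hbig.trans_le main
  have hlt' : (L : ℝ≥0∞) * (r : ℝ≥0∞) / 2 + (L : ℝ≥0∞) * (r : ℝ≥0∞) / 2 <
      dtw (treeDist parent weight) (X.map s) (Y.map s)
        + (L : ℝ≥0∞) * (r : ℝ≥0∞) / 2 := by
    rw [ENNReal.add_halves]; exact hlt
  exact (ENNReal.add_lt_add_iff_right hfin).mp hlt'
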